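/- Let V be a finite-dimensional real inner product space with three linear isometries I, J, K : V → V satisfying I² = J² = K² = -id and I∘J = K. Let G ⊆ T be subspaces of V such that A(G) ⊆ T^⊥ for each A ∈ {I, J, K}. Then the subspaces I(G), J(G), K(G) are pairwise orthogonal: ⟨Iξ, Jη⟩ = ⟨Jξ, Kη⟩ = ⟨Iξ, Kη⟩ = 0 for all ξ, η ∈ G. -/
import Mathlib


open Submodule RealInnerProductSpace

/-- In the setting of a tri-hamiltonian action at a point of `μ⁻¹(0)`: the subspaces
`I(G), J(G), K(G)` are pairwise orthogonal. -/
theorem IG_JG_KG_pairwise_orthogonal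
    (V : Type*) [NormedAddCommGroup V] [InnerProductSpace ℝ V] [FiniteDimensional ℝ V]
    (I J K : V →ₗᵢ[ℝ] V)
    (hI : ∀ v : V, I (I v) = -v) (hJ : ∀ v : V, J (J v) = -v)
    (hK : ∀ v : V, K (K v) = -v) (hIJ : ∀ v : V, I (J v) = K v)
    (G T : Submodule ℝ V) (hGT : G ≤ T)
    (hIG : ∀ g ∈ G, I g ∈ Tᗮ) (hJG : ∀ g ∈ G, J g ∈ Tᗮ) (hKG : ∀ g ∈ G, K g ∈ Tᗮ) :
    ∀ ξ ∈ G, ∀ η ∈ G,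
      ⟪I ξ, J η⟫ = 0 ∧ ⟪J ξ, K η⟫ = 0 ∧ ⟪I ξ, K η⟫ = 0 := by
  intro ξ hξ η hη
  have hKJ : ∀ v : V, K (J v) = -(I v) := by
    intro v
    rw [← hIJ (J v), hJ, map_neg]
  have hIK : ∀ v : V, I (K v) = -(J v) := by
    intro v
    rw [← hIJ v, hI]
  refine ⟨?_, ?_, ?_⟩
  · have h1 : ⟪I ξ, J η⟫ = ⟪I (I ξ), I (J η)⟫ := (I.inner_map_map _ _).symm
    rw [h1, hI, hIJ, inner_neg_left]
    rw [(hKG η hη) ξ (hGT hξ), neg_zero]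
  · have h1 : ⟪J ξ, K η⟫ = ⟪K (J ξ), K (K η)⟫ := (K.inner_map_map _ _).symm
    rw [h1, hKJ, hK, inner_neg_left, inner_neg_right, neg_neg]
    rw [real_inner_comm]
    exact (hIG ξ hξ) η (hGT hη)
  · have h1 : ⟪I ξ, K η⟫ = ⟪I (I ξ), I (K η)⟫ := (I.inner_map_map _ _).symm
    rw [h1, hI, hIK, inner_neg_neg]
    exact (hJG η hη) ξ (hGT hξ)
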